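/- arXiv:1307.6896 — 3 statements merged into one kernel-verified Lean document; each statement's English description precedes it below -/
import Mathlib

section
/- Let Γ^op be the category whose objects are the pointed finite sets [n] = {0,1,...,n} and whose morphisms are functions φ : [n] → [m] with φ(0) = 0. For n ≥ 1 let p^n_k : [n] → [1] be the map sending k to 1 and everything else to 0. Then the category of functors A : Γ^op → Set such that for every n the map (A(p^n_1),...,A(p^n_n)) : A([n]) → A([1])^n is a bijection and A([0]) is a singleton, with natural transformations as morphisms, is equivalent to the category of commutative monoids. -/
open CategoryTheory

/-- Segal's category `Γᵒᵖ`: objects are the pointed finite sets `[n] = {0,1,…,n}`,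
morphisms are basepoint-preserving functions. -/
structure GammaOp where
  n : ℕ

instance : Category GammaOp where
  Hom a b := {φ : Fin (a.n + 1) → Fin (b.n + 1) // φ 0 = 0}
  id a := ⟨id, rfl⟩
  comp f g := ⟨g.1 ∘ f.1, by simp [Function.comp, f.2, g.2]⟩

/-- The projection `p^n_k : [n] → [1]` sending `k+1`-st nonbasepoint to `1` and
everything else to `0`. -/
def gammaProj (n : ℕ) (k : Fin n) : (GammaOp.mk n) ⟶ (GammaOp.mk 1) :=
  ⟨fun i => if i = k.succ then 1 else 0, by simp [Fin.ext_iff]⟩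

/-- The strict-algebra condition: `A` sends each structure cone of `Γᵒᵖ` to a product
cone, and sends `[0]` to a singleton. -/
def GammaAlgebra (A : GammaOp ⥤ Type) : Prop :=
  (∀ n : ℕ, Function.Bijective
      (fun (x : A.obj (GammaOp.mk n)) (k : Fin n) => A.map (gammaProj n k) x)) ∧
    (Nonempty (A.obj (GammaOp.mk 0)) ∧ Subsingleton (A.obj (GammaOp.mk 0)))

namespace Gma

abbrev Gm (n : ℕ) : GammaOp := GammaOp.mk n

@[simp] lemma comp_val {a b c : GammaOp} (f : a ⟶ b) (g : b ⟶ c) (i) :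
    (f ≫ g).1 i = g.1 (f.1 i) := rfl

@[simp] lemma id_val (a : GammaOp) (i) : (𝟙 a : a ⟶ a).1 i = i := rfl

/-- make a morphism from its action on nonbasepoints -/
def mk' {n m : ℕ} (f : Fin n → Fin (m + 1)) : Gm n ⟶ Gm m :=
  ⟨Fin.cases 0 f, by simp⟩

@[simp] lemma mk'_succ {n m : ℕ} (f : Fin n → Fin (m + 1)) (i : Fin n) :
    (mk' f).1 i.succ = f i := by simp [mk']

@[simp] lemma mk'_zero {n m : ℕ} (f : Fin n → Fin (m + 1)) :
    (mk' f).1 0 = 0 := rfl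

def fold₂ : Gm 2 ⟶ Gm 1 := mk' (fun _ => 1)

def χ {n : ℕ} (S : Finset (Fin n)) : Gm n ⟶ Gm 1 :=
  mk' (fun i => if i ∈ S then 1 else 0)

def toZero {n : ℕ} : Gm n ⟶ Gm 0 := ⟨fun _ => 0, rfl⟩

def ι : Gm 0 ⟶ Gm 1 := ⟨fun _ => 0, rfl⟩

lemma hom_ext {a b : GammaOp} {f g : a ⟶ b}
    (h : ∀ i : Fin a.n, f.1 i.succ = g.1 i.succ) : f = g := by
  apply Subtype.ext; funext i
  refine Fin.cases ?_ h i
  rw [f.2, g.2]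

lemma χ_empty {n : ℕ} : χ (∅ : Finset (Fin n)) = toZero ≫ ι := by
  apply hom_ext; intro i; simp [χ, toZero, ι]

lemma χ_singleton {n : ℕ} (k : Fin n) : χ {k} = gammaProj n k := by
  apply hom_ext; intro i
  simp [χ, gammaProj, Fin.succ_inj]

/-- auxiliary map for peeling an element off `χ (insert a S)` -/
def peel {n : ℕ} (a : Fin n) (S : Finset (Fin n)) : Gm n ⟶ Gm 2 :=
  mk' (fun i => if i = a then 1 else if i ∈ S then 2 else 0)

lemma peel_fold {n : ℕ} (a : Fin n) (S : Finset (Fin n)) :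
    peel a S ≫ fold₂ = χ (insert a S) := by
  apply hom_ext; intro i
  by_cases h1 : i = a <;> by_cases h2 : i ∈ S <;>
    simp [peel, χ, fold₂, h1, h2] <;> rfl

lemma peel_p0 {n : ℕ} (a : Fin n) (S : Finset (Fin n)) :
    peel a S ≫ gammaProj 2 0 = gammaProj n a := by
  apply hom_ext; intro i
  by_cases h1 : i = a <;> by_cases h2 : i ∈ S <;>
    simp [peel, gammaProj, Fin.succ_inj, h1, h2]

lemma peel_p1 {n : ℕ} (a : Fin n) (S : Finset (Fin n)) (ha : a ∉ S) :
    peel a S ≫ gammaProj 2 1 = χ S := by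
  apply hom_ext; intro i
  by_cases h1 : i = a <;> by_cases h2 : i ∈ S <;>
    simp_all [peel, χ, gammaProj, Fin.succ_inj]

lemma fold₂_eq_χ : fold₂ = χ (Finset.univ : Finset (Fin 2)) := by
  apply hom_ext; intro i; simp [fold₂, χ]

lemma gammaProj_one (k : Fin 1) : gammaProj 1 k = 𝟙 (Gm 1) := by
  apply hom_ext; intro i
  have : k = 0 := Subsingleton.elim _ _
  subst this
  fin_cases i <;> rfl

/-- every map to `[1]` is a `χ` -/
lemma eq_χ {n : ℕ} (ψ : Gm n ⟶ Gm 1) :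
    ψ = χ (Finset.univ.filter fun i => ψ.1 i.succ = 1) := by
  apply hom_ext; intro i
  simp only [χ, mk'_succ, Finset.mem_filter, Finset.mem_univ, true_and]
  by_cases h : ψ.1 i.succ = 1
  · simp [h]
  · simp only [h, if_false]
    have : ((ψ.1 i.succ) : ℕ) < 2 := (ψ.1 i.succ).isLt
    simp only [Fin.ext_iff, Fin.val_one, Fin.val_zero] at h ⊢
    omega

lemma comp_proj_eq_χ {n m : ℕ} (φ : Gm n ⟶ Gm m) (k : Fin m) :
    φ ≫ gammaProj m k = χ (Finset.univ.filter fun i => φ.1 i.succ = k.succ) := by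
  rw [eq_χ (φ ≫ gammaProj m k)]
  congr 1
  apply Finset.filter_congr
  intro i _
  simp [gammaProj]

end Gma

namespace Gma

variable {A : GammaOp ⥤ Type} (hA : GammaAlgebra A)

/-- the Segal equivalence `A [n] ≃ A[1]^n` -/
noncomputable def segal (n : ℕ) :
    A.obj (Gm n) ≃ (Fin n → A.obj (Gm 1)) :=
  Equiv.ofBijective _ (hA.1 n)

lemma segal_apply {n : ℕ} (x : A.obj (Gm n)) (k : Fin n) :
    segal hA n x k = A.map (gammaProj n k) x := rfl

lemma segal_map {n m : ℕ} (φ : Gm n ⟶ Gm m) (x : A.obj (Gm n)) (k : Fin m) :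
    segal hA m (A.map φ x) k = A.map (φ ≫ gammaProj m k) x := by
  rw [segal_apply, FunctorToTypes.map_comp_apply]

noncomputable def pt : A.obj (Gm 0) := hA.2.1.some

noncomputable def algOne : A.obj (Gm 1) := A.map ι (pt hA)

noncomputable def algMul (a b : A.obj (Gm 1)) : A.obj (Gm 1) :=
  A.map fold₂ ((segal hA 2).symm ![a, b])

lemma map_toZero {n : ℕ} (x : A.obj (Gm n)) : A.map toZero x = pt hA :=
  @Subsingleton.elim _ hA.2.2 _ _

lemma map_χ_empty {n : ℕ} (x : A.obj (Gm n)) :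
    A.map (χ (∅ : Finset (Fin n))) x = algOne hA := by
  rw [χ_empty, FunctorToTypes.map_comp_apply, map_toZero]; rfl

lemma map_χ_insert {n : ℕ} {a : Fin n} {S : Finset (Fin n)} (ha : a ∉ S)
    (x : A.obj (Gm n)) :
    A.map (χ (insert a S)) x
      = algMul hA (A.map (gammaProj n a) x) (A.map (χ S) x) := by
  have key : A.map (peel a S) x
      = (segal hA 2).symm ![A.map (gammaProj n a) x, A.map (χ S) x] := by
    rw [Equiv.eq_symm_apply]
    funext k
    rw [segal_map]
    fin_cases k
    · show A.map (peel a S ≫ gammaProj 2 0) x = A.map (gammaProj n a) x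
      rw [peel_p0]
    · show A.map (peel a S ≫ gammaProj 2 1) x = A.map (χ S) x
      rw [peel_p1 _ _ ha]
  rw [← peel_fold, FunctorToTypes.map_comp_apply, key]
  rfl

lemma map_χ_single {n : ℕ} (k : Fin n) (x : A.obj (Gm n)) :
    A.map (χ {k}) x = A.map (gammaProj n k) x := by rw [χ_singleton]

lemma segal_symm_proj {n : ℕ} (v : Fin n → A.obj (Gm 1)) (k : Fin n) :
    A.map (gammaProj n k) ((segal hA n).symm v) = v k := by
  rw [← segal_apply hA, Equiv.apply_symm_apply]

lemma algMul_comm (a b : A.obj (Gm 1)) : algMul hA a b = algMul hA b a := by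
  set x := (segal hA 2).symm ![a, b] with hx
  have h0 : A.map (gammaProj 2 0) x = a := segal_symm_proj hA _ 0
  have h1 : A.map (gammaProj 2 1) x = b := segal_symm_proj hA _ 1
  have e1 : algMul hA a b = A.map (χ (Finset.univ : Finset (Fin 2))) x := by
    rw [← fold₂_eq_χ]; rfl
  have u01 : (Finset.univ : Finset (Fin 2)) = insert 0 {1} := by decide
  have u10 : (Finset.univ : Finset (Fin 2)) = insert 1 {0} := by decide
  have c1 : algMul hA a b = algMul hA a b := rfl
  have e2 : A.map (χ (Finset.univ : Finset (Fin 2))) x = algMul hA a b := by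
    rw [u01, map_χ_insert hA (by decide), map_χ_single, h0, h1]
  have e3 : A.map (χ (Finset.univ : Finset (Fin 2))) x = algMul hA b a := by
    rw [u10, map_χ_insert hA (by decide), map_χ_single, h0, h1]
  rw [e1, e3]

lemma algMul_one (a : A.obj (Gm 1)) : algMul hA a (algOne hA) = a := by
  have h0 : A.map (gammaProj 1 0) a = a := by rw [gammaProj_one]; simp
  have := map_χ_insert hA (a := (0 : Fin 1)) (S := ∅) (by simp) a
  rw [map_χ_empty, h0] at this
  have hs : (insert (0 : Fin 1) ∅ : Finset (Fin 1)) = {0} := rfl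
  rw [hs, map_χ_single, h0] at this
  exact this.symm

lemma algOne_mul (a : A.obj (Gm 1)) : algMul hA (algOne hA) a = a := by
  rw [algMul_comm]; exact algMul_one hA a

lemma algMul_assoc (a b c : A.obj (Gm 1)) :
    algMul hA (algMul hA a b) c = algMul hA a (algMul hA b c) := by
  set y := (segal hA 3).symm ![a, b, c] with hy
  have h0 : A.map (gammaProj 3 0) y = a := segal_symm_proj hA _ 0
  have h1 : A.map (gammaProj 3 1) y = b := segal_symm_proj hA _ 1
  have h2 : A.map (gammaProj 3 2) y = c := segal_symm_proj hA _ 2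
  -- a * (b * c)
  have e1 : A.map (χ ({0,1,2} : Finset (Fin 3))) y
      = algMul hA a (algMul hA b c) := by
    have : ({0,1,2} : Finset (Fin 3)) = insert 0 {1,2} := rfl
    rw [this, map_χ_insert hA (by decide), h0]
    have : ({1,2} : Finset (Fin 3)) = insert 1 {2} := rfl
    rw [this, map_χ_insert hA (by decide), h1, map_χ_single, h2]
  -- c * (a * b)
  have e2 : A.map (χ ({0,1,2} : Finset (Fin 3))) y
      = algMul hA c (algMul hA a b) := by
    have : ({0,1,2} : Finset (Fin 3)) = insert 2 {0,1} := by decide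
    rw [this, map_χ_insert hA (by decide), h2]
    have : ({0,1} : Finset (Fin 3)) = insert 0 {1} := rfl
    rw [this, map_χ_insert hA (by decide), h0, map_χ_single, h1]
  rw [← e1, e2, algMul_comm]

noncomputable def algCommMonoid : CommMonoid (A.obj (Gm 1)) where
  mul := algMul hA
  one := algOne hA
  mul_assoc := algMul_assoc hA
  one_mul := algOne_mul hA
  mul_one := algMul_one hA
  mul_comm := algMul_comm hA

lemma algMul_def (a b : A.obj (Gm 1)) :
    @HMul.hMul _ _ _ (@instHMul _ (@Mul.mk _ (algCommMonoid hA).mul)) a b = algMul hA a b := rfl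


lemma map_χ_prod {n : ℕ} (S : Finset (Fin n)) (x : A.obj (Gm n)) :
    A.map (χ S) x
      = @Finset.prod _ _ (algCommMonoid hA) S (fun i => A.map (gammaProj n i) x) := by
  letI := algCommMonoid hA
  induction S using Finset.induction_on with
  | empty => rw [Finset.prod_empty]; exact map_χ_empty hA x
  | @insert a s ha ih => rw [Finset.prod_insert ha, ← ih]; exact map_χ_insert hA ha x

lemma segal_map_prod {n m : ℕ} (φ : Gm n ⟶ Gm m) (x : A.obj (Gm n)) (k : Fin m) :
    segal hA m (A.map φ x) k
      = @Finset.prod _ _ (algCommMonoid hA)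
          (Finset.univ.filter fun i => φ.1 i.succ = k.succ)
          (fun i => segal hA n x i) := by
  rw [segal_map, comp_proj_eq_χ, map_χ_prod]
  rfl


lemma segal_one_apply (x : A.obj (Gm 1)) (k : Fin 1) : segal hA 1 x k = x := by
  rw [segal_apply, gammaProj_one]
  simp

lemma segal_one_symm (v : Fin 1 → A.obj (Gm 1)) : (segal hA 1).symm v = v 0 := by
  rw [Equiv.symm_apply_eq]
  funext k
  rw [segal_one_apply]
  exact congrArg v (Subsingleton.elim _ _)

end Gma

open Gma

/-- the functor from algebras to commutative monoids -/
noncomputable def algebraToMon : ObjectProperty.FullSubcategory GammaAlgebra ⥤ CommMonCat.{0} where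
  obj X := letI := algCommMonoid X.2; CommMonCat.of (X.1.obj (Gm 1))
  map {X Y} η :=
    letI := algCommMonoid X.2; letI := algCommMonoid Y.2
    CommMonCat.ofHom
    { toFun := fun x => η.hom.app (Gm 1) x
      map_one' := by
        show η.hom.app (Gm 1) (algOne X.2) = algOne Y.2
        unfold algOne
        rw [FunctorToTypes.naturality]
        exact congrArg _ (@Subsingleton.elim _ Y.2.2.2 _ _)
      map_mul' := fun a b => by
        show η.hom.app (Gm 1) (algMul X.2 a b) = algMul Y.2 _ _
        have key : η.hom.app (Gm 2) ((segal X.2 2).symm ![a, b])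
            = (segal Y.2 2).symm ![η.hom.app (Gm 1) a, η.hom.app (Gm 1) b] := by
          rw [Equiv.eq_symm_apply]
          funext k
          rw [segal_apply, ← FunctorToTypes.naturality, segal_symm_proj X.2]
          fin_cases k <;> simp
        unfold algMul
        rw [FunctorToTypes.naturality, key] }
  map_id X := by
    apply CommMonCat.ext; intro x; rfl
  map_comp f g := by
    apply CommMonCat.ext; intro x; rfl

lemma algebraToMon_map_app {X Y : ObjectProperty.FullSubcategory GammaAlgebra} (η : X ⟶ Y)
    (x : X.1.obj (Gm 1)) : (algebraToMon.map η) x = η.hom.app (Gm 1) x := rfl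

lemma algebraToMon_faithful : algebraToMon.Faithful := by
  constructor
  intro X Y η η' h
  have h1 : ∀ x, η.hom.app (Gm 1) x = η'.hom.app (Gm 1) x := by
    intro x
    exact ConcreteCategory.congr_hom h x
  apply InducedCategory.hom_ext
  apply NatTrans.ext
  funext W
  apply ConcreteCategory.hom_ext
  intro x
  apply (Y.2.1 W.n).1
  funext k
  show Y.1.map (gammaProj W.n k) (η.hom.app W x) = Y.1.map (gammaProj W.n k) (η'.hom.app W x)
  rw [← FunctorToTypes.naturality, ← FunctorToTypes.naturality, h1]

lemma algebraToMon_full : algebraToMon.Full := by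
  constructor
  intro X Y g
  letI iX := algCommMonoid X.2
  letI iY := algCommMonoid Y.2
  refine ⟨⟨⟨fun W => TypeCat.ofHom fun x => (segal Y.2 W.n).symm (fun i => g (segal X.2 W.n x i)), ?_⟩⟩, ?_⟩
  · intro W V f
    apply ConcreteCategory.hom_ext
    intro x
    show (segal Y.2 V.n).symm (fun i => g (segal X.2 V.n (X.1.map f x) i))
        = Y.1.map f ((segal Y.2 W.n).symm (fun i => g (segal X.2 W.n x i)))
    erw [Equiv.symm_apply_eq]
    funext k
    rw [segal_map_prod Y.2 f, segal_map_prod X.2 f]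
    erw [map_prod]
    apply Finset.prod_congr rfl
    intro i _
    erw [Equiv.apply_symm_apply]
  · apply CommMonCat.ext
    intro x
    show (segal Y.2 1).symm (fun i => g (segal X.2 1 x i)) = g x
    erw [segal_one_symm, segal_one_apply]
-- checkpoint

/-- the canonical algebra attached to a commutative monoid -/
def gammaOfMonoid (M : Type) [CommMonoid M] : GammaOp ⥤ Type where
  obj W := Fin W.n → M
  map {W V} φ := TypeCat.ofHom fun v => fun k => ∏ i, if φ.1 i.succ = k.succ then v i else 1
  map_id W := by
    apply ConcreteCategory.hom_ext
    intro v
    funext k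
    show (∏ i, if Fin.succ i = k.succ then v i else 1) = v k
    simp [Fin.succ_inj, Finset.prod_ite_eq']
  map_comp {W V U} f g := by
    apply ConcreteCategory.hom_ext
    intro v
    funext k
    show (∏ i, if g.1 (f.1 i.succ) = k.succ then v i else 1)
        = ∏ j : Fin V.n, if g.1 j.succ = k.succ then (∏ i, if f.1 i.succ = j.succ then v i else 1) else 1
    have step1 : ∀ j : Fin V.n,
        (if g.1 j.succ = k.succ then (∏ i, if f.1 i.succ = j.succ then v i else 1) else 1)
          = ∏ i, (if g.1 j.succ = k.succ ∧ f.1 i.succ = j.succ then v i else 1) := by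
      intro j
      by_cases h : g.1 j.succ = k.succ <;> simp [h]
    rw [Finset.prod_congr rfl (fun j _ => step1 j), Finset.prod_comm]
    apply Finset.prod_congr rfl
    intro i _
    rcases Fin.eq_zero_or_eq_succ (f.1 i.succ) with h | ⟨j₀, h⟩
    · rw [h, g.2]
      have h1 : ((0 : Fin (U.n+1)) = k.succ) = False := by
        simp [(Fin.succ_ne_zero k).symm, eq_comm]
      have h2 : ∀ j : Fin V.n, ((0 : Fin (V.n+1)) = j.succ) = False := by
        intro j; simp [eq_comm]
      simp [h1, h2]
    · rw [h]
      have h2 : ∀ j : Fin V.n,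
          (if g.1 j.succ = k.succ ∧ j₀.succ = j.succ then v i else 1)
            = (if j₀ = j then (if g.1 j.succ = k.succ then v i else 1) else 1) := by
        intro j
        by_cases h1 : j₀ = j <;> by_cases hg : g.1 j.succ = k.succ <;>
          simp_all [Fin.succ_inj]
      rw [Finset.prod_congr rfl (fun j _ => h2 j), Finset.prod_ite_eq]
      simp

lemma gammaOfMonoid_proj (M : Type) [CommMonoid M] {n : ℕ} (k : Fin n)
    (v : Fin n → M) :
    (gammaOfMonoid M).map (gammaProj n k) v = fun _ => v k := by
  funext z
  have hz : z = 0 := Subsingleton.elim _ _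
  subst hz
  show (∏ i, if (if Fin.succ i = k.succ then 1 else 0 : Fin 2) = Fin.succ 0 then v i else 1)
      = v k
  have hc : ∀ i : Fin n,
      ((if Fin.succ i = k.succ then 1 else 0 : Fin 2) = Fin.succ 0) = (i = k) := by
    intro i
    by_cases h : i = k <;> simp [h, Fin.succ_inj] <;> decide
  simp only [hc]
  rw [Finset.prod_ite_eq']
  simp

lemma gammaOfMonoid_isAlgebra (M : Type) [CommMonoid M] :
    GammaAlgebra (gammaOfMonoid M) := by
  refine ⟨fun n => ⟨?_, ?_⟩, ⟨Fin.elim0⟩, ⟨fun x y => funext fun i => i.elim0⟩⟩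
  · intro v w h
    funext i
    have h' : (gammaOfMonoid M).map (gammaProj n i) v
        = (gammaOfMonoid M).map (gammaProj n i) w := congrFun h i
    erw [gammaOfMonoid_proj, gammaOfMonoid_proj] at h'
    exact congrFun h' 0
  · intro w
    refine ⟨fun i => w i 0, ?_⟩
    funext k
    show (gammaOfMonoid M).map (gammaProj n k) (fun i => w i 0) = w k
    rw [gammaOfMonoid_proj]
    funext z
    exact congrArg (w k) (Subsingleton.elim _ _)

lemma algebraToMon_essSurj : algebraToMon.EssSurj := by
  constructor
  intro M
  refine ⟨⟨gammaOfMonoid M, gammaOfMonoid_isAlgebra M⟩, ⟨?_⟩⟩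
  letI h2 := gammaOfMonoid_isAlgebra (M : Type)
  letI iF : CommMonoid ((gammaOfMonoid (M : Type)).obj (Gm 1)) := algCommMonoid h2
  have ext1 : ∀ u v : Fin 1 → (M : Type), u 0 = v 0 → u = v := by
    intro u v h
    funext z
    have hz : z = 0 := Subsingleton.elim _ _
    rw [hz, h]
  have hmul : ∀ v w : Fin 1 → (M : Type), (algMul h2 v w) 0 = v 0 * w 0 := by
    intro v w
    have hu : (segal h2 2).symm ![v, w] = ![v 0, w 0] := by
      erw [Equiv.symm_apply_eq]
      funext k
      erw [segal_apply, gammaOfMonoid_proj]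
      funext z
      have hz : z = 0 := Subsingleton.elim _ _
      subst hz
      fin_cases k <;> rfl
    show ((gammaOfMonoid (M : Type)).map fold₂ ((segal h2 2).symm ![v, w])) 0 = v 0 * w 0
    rw [hu]
    show (∏ i : Fin 2, if fold₂.1 i.succ = Fin.succ 0 then ![v 0, w 0] i else 1)
        = v 0 * w 0
    have hf : ∀ i : Fin 2, fold₂.1 i.succ = Fin.succ 0 := by
      intro i
      simp only [fold₂, mk'_succ]
      decide
    simp only [hf, if_true]
    rw [Fin.prod_univ_two]
    rfl
  have hone : (algOne h2 : Fin 1 → (M : Type)) 0 = 1 := by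
    show (∏ i : Fin 0, if ι.1 i.succ = Fin.succ 0 then pt h2 i else 1) = 1
    simp
  refine ⟨CommMonCat.ofHom ⟨⟨fun (v : (gammaOfMonoid (M : Type)).obj (Gm 1)) => v 0, hone⟩,
      fun v w => hmul v w⟩,
    CommMonCat.ofHom ⟨⟨fun a => (fun _ => a : (gammaOfMonoid (M : Type)).obj (Gm 1)), ?_⟩,
      fun a b => ?_⟩, ?_, ?_⟩
  · exact ext1 _ _ hone.symm
  · refine ext1 _ _ ?_
    show a * b = algMul h2 (fun _ => a) (fun _ => b) 0
    rw [hmul]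
  · apply CommMonCat.ext
    intro v
    exact ext1 _ _ rfl
  · apply CommMonCat.ext
    intro a
    rfl

/-- The category of strict `(Γᵒᵖ, {αⁿ})`-algebras in `Set` is equivalent to the
category of commutative monoids. -/
theorem gammaOp_algebras_equiv_commMonoids :
    Nonempty (ObjectProperty.FullSubcategory GammaAlgebra ≌ CommMonCat.{0}) := by
  letI := algebraToMon_faithful
  letI := algebraToMon_full
  letI := algebraToMon_essSurj
  letI : algebraToMon.IsEquivalence := {}
  exact ⟨algebraToMon.asEquivalence⟩
end

section
/- Let J_C : P → C be the inclusion of the initial S-sorted semi-theory P into a free S-sorted semi-theory C (free on a set of generating morphisms containing the projections). Define J_{C*} : sSet^P → sSet^C on objects by (J_{C*}Y)(c) = Y(c) ⊔ ⨆_{φ ∈ G_c} Y(dom φ), where G_c is the set of morphisms φ : c_i → c in C that factor as composites ζ_k ∘ ⋯ ∘ ζ₁ of free generators with ζ₁ not a projection. Then J_{C*} is left adjoint to the restriction functor J_C* : sSet^C → sSet^P. -/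
open CategoryTheory Limits

noncomputable section

variable (S : Type) (gen : List S → List S → Type)

/-- Vertices of the generating quiver of the free `S`-sorted semi-theory `C`:
tuples of sorts. -/
def FObj (_gen : List S → List S → Type) : Type := List S

/-- The generating quiver of `C`: for each tuple the projection edges, together
with a set `gen` of further free generators. -/
instance : Quiver (FObj S gen) where
  Hom x y := ({k : Fin (List.length (x : List S)) // [List.get (x : List S) k] = y}) ⊕ gen x y

/-- Vertices of the generating quiver of the initial semi-theory `P`. -/
def PObjQ : Type := List S

/-- The generating quiver of `P`: only the projection edges. -/
instance : Quiver (PObjQ S) where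
  Hom x y := {k : Fin (List.length (x : List S)) // [List.get (x : List S) k] = y}

/-- The free `S`-sorted semi-theory `C` on the given generators. -/
abbrev FreeC := Paths (FObj S gen)

/-- The initial `S`-sorted semi-theory `P` (freely generated by the projections). -/
abbrev FreeP := Paths (PObjQ S)

/-- The inclusion `J_C : P → C`. -/
def JC : FreeP S ⥤ FreeC S gen :=
  Paths.lift
    { obj := fun l => (Paths.of (FObj S gen)).obj (show FObj S gen from (l : List S))
      map := fun e => ((Paths.of (V := FObj S gen)).map (Sum.inl e)) }

/-- A path in `C` whose first edge (the edge at its source) is not a projection. -/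
def startsGen : ∀ {a b : FObj S gen}, Quiver.Path a b → Prop
  | _, _, .nil => False
  | _, _, .cons .nil e => (match e with | Sum.inl _ => False | Sum.inr _ => True)
  | _, _, .cons (.cons p e') _ => startsGen (Quiver.Path.cons p e')

/-- The set `G_c` of morphisms `φ : c_i → c` of `C` which factor as composites of
generators whose first generator is not a projection. -/
def Gset (c : FObj S gen) : Type :=
  Σ ci : FObj S gen, {p : Quiver.Path ci c // startsGen S gen p}

/-- The restriction functor `J_C^* : sSet^C → sSet^P`. -/
def Jstar : (FreeC S gen ⥤ SSet.{0}) ⥤ (FreeP S ⥤ SSet.{0}) :=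
  (Functor.whiskeringLeft (FreeP S) (FreeC S gen) SSet.{0}).obj (JC S gen)

variable {S gen}

/-- view an object of `FreeC` as an object of `FreeP`. -/
abbrev oP (a : FObj S gen) : FreeP S := (a : List S)

lemma startsGen_cons {a b c : FObj S gen} (p : Quiver.Path a b) (e : b ⟶ c)
    (hp : startsGen S gen p) : startsGen S gen (p.cons e) := by
  cases p with
  | nil => simp [startsGen] at hp
  | cons q e' => simpa [startsGen] using hp

/-- the path underlying an element of `Gset`, as a morphism of `FreeC`. -/
def gHom {c : FObj S gen} (g : Gset S gen c) :
    @Quiver.Hom (FreeC S gen) CategoryStruct.toQuiver g.1 c := g.2.1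

def DecData (a c : FObj S gen) (p : Quiver.Path a c) : Type :=
  {h : (oP a : FreeP S) ⟶ oP c // (JC S gen).map h = (p : (JC S gen).obj (oP a) ⟶ (JC S gen).obj (oP c))} ⊕
  Σ g : Gset S gen c, {h : (oP a : FreeP S) ⟶ oP g.1 // (JC S gen).map h ≫ gHom g = (p : (JC S gen).obj (oP a) ⟶ (JC S gen).obj (oP c))}

def dec : ∀ {a c : FObj S gen} (p : Quiver.Path a c), DecData a c p
  | _, _, .nil => Sum.inl ⟨Quiver.Path.nil, rfl⟩
  | _, _, .cons (b := b) q e =>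
    match dec q with
    | Sum.inl ⟨h, hh⟩ =>
      match e with
      | Sum.inl pr => Sum.inl ⟨h.cons pr, by subst hh; rfl⟩
      | Sum.inr ge => Sum.inr ⟨⟨b, ⟨Quiver.Path.nil.cons (Sum.inr ge), by simp [startsGen]⟩⟩, h,
          by subst hh; rfl⟩
    | Sum.inr ⟨g, h, hh⟩ =>
      Sum.inr ⟨⟨g.1, ⟨g.2.1.cons e, startsGen_cons _ _ g.2.2⟩⟩, h,
        by subst hh; rfl⟩


def shift {a' a c : FObj S gen} (φ : (oP a' : FreeP S) ⟶ oP a) {p : Quiver.Path a c} :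
    DecData a c p → DecData a' c ((JC S gen).map φ ≫ (p : (JC S gen).obj (oP a) ⟶ (JC S gen).obj (oP c)))
  | Sum.inl ⟨h, hh⟩ => Sum.inl ⟨φ ≫ h, by subst hh; exact Functor.map_comp _ _ _⟩
  | Sum.inr ⟨g, h, hh⟩ => Sum.inr ⟨g, φ ≫ h, by subst hh; rw [Functor.map_comp]; exact Category.assoc _ _ _⟩

lemma dec_JC {a : FObj S gen} : ∀ {c : PObjQ S}
    (φ : @Quiver.Hom (FreeP S) CategoryStruct.toQuiver (oP a) c),
    dec (gen := gen) (a := a) (c := c) ((JC S gen).map φ) = Sum.inl ⟨φ, rfl⟩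
  | _, .nil => by
    show dec (gen := gen) (Quiver.Path.nil) = _
    rw [dec]; rfl
  | _, .cons ψ pr => by
    show dec (((JC S gen).map ψ).cons (Sum.inl pr)) = _
    erw [dec, dec_JC ψ]; rfl

lemma dec_comp {a' a : FObj S gen} (φ : (oP a' : FreeP S) ⟶ oP a) :
    ∀ {c : FObj S gen} (q : Quiver.Path a c),
      dec ((JC S gen).map φ ≫ (q : @Quiver.Hom (FreeC S gen) CategoryStruct.toQuiver a c)) =
        shift φ (dec q)
  | _, .nil => by
    show dec ((JC S gen).map φ) = _
    erw [dec_JC]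
    simp only [dec, shift]
    rfl
  | _, .cons r e => by
    show dec (((JC S gen).map φ ≫ (r : @Quiver.Hom (FreeC S gen) CategoryStruct.toQuiver a _)).cons e) = _
    erw [dec, dec, dec_comp φ r]
    rcases dec (gen := gen) r with ⟨h, hh⟩ | ⟨g, h, hh⟩ <;>
      rcases e with _ | _ <;> simp only [shift] <;> rfl

lemma dec_startsGen : ∀ {a c : FObj S gen} (p : Quiver.Path a c) (hp : startsGen S gen p),
    dec (gen := gen) p = Sum.inr ⟨⟨a, p, hp⟩, 𝟙 (oP a), by
      rw [CategoryTheory.Functor.map_id]; exact Category.id_comp _⟩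
  | _, _, .nil, hp => by simp [startsGen] at hp
  | _, _, .cons .nil (Sum.inl pr), hp => by simp [startsGen] at hp
  | _, _, .cons .nil (Sum.inr ge), hp => by simp only [dec]; rfl
  | _, _, .cons (.cons r e') e, hp => by
    have hq : startsGen S gen (r.cons e') := by simpa [startsGen] using hp
    rw [dec, dec_startsGen (r.cons e') hq]


lemma dec_nil {a : FObj S gen} :
    dec (gen := gen) (Quiver.Path.nil (a := a)) = Sum.inl ⟨Quiver.Path.nil, rfl⟩ := by
  rw [dec]

variable (Y : FreeP S ⥤ SSet.{0}) (c : FObj S gen)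

def cpt : SSet.{0} :=
  (Y.obj (oP c)) ⨿ (∐ fun g : Gset S gen c => Y.obj (oP g.1))

def decMap {a : FObj S gen} {p : Quiver.Path a c} : DecData a c p → (Y.obj (oP a) ⟶ cpt Y c)
  | Sum.inl ⟨h, _⟩ => Y.map h ≫ coprod.inl
  | Sum.inr ⟨g, h, _⟩ => Y.map h ≫ Sigma.ι (fun g : Gset S gen c => Y.obj (oP g.1)) g ≫ coprod.inr

lemma decMap_shift {a' a : FObj S gen} (φ : (oP a' : FreeP S) ⟶ oP a) {p : Quiver.Path a c}
    (d : DecData a c p) : decMap Y c (shift φ d) = Y.map φ ≫ decMap Y c d := by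
  rcases d with ⟨h, hh⟩ | ⟨g, h, hh⟩ <;> simp [decMap, shift]; exact Category.assoc _ _ _

def myCocone : Cocone (CostructuredArrow.proj (JC S gen) (id c : FreeC S gen) ⋙ Y) where
  pt := cpt Y c
  ι :=
    { app := fun f => decMap Y c (dec f.hom)
      naturality := fun f f' m => by
        dsimp
        rw [Category.comp_id]
        have w : (JC S gen).map m.left ≫ f'.hom = f.hom := CostructuredArrow.w m
        erw [← w, dec_comp, decMap_shift]; rfl }

/-- the canonical object of the comma category corresponding to the identity. -/
def jId : CostructuredArrow (JC S gen) (id c : FreeC S gen) :=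
  CostructuredArrow.mk ((JC S gen).map (𝟙 (oP c)))

/-- the canonical object of the comma category corresponding to `g : Gset`. -/
def jG (g : Gset S gen c) : CostructuredArrow (JC S gen) (id c : FreeC S gen) :=
  CostructuredArrow.mk (show (JC S gen).obj (oP g.1) ⟶ c from gHom g)

lemma myCocone_ι_id : (myCocone Y c).ι.app (jId c) = coprod.inl := by
  dsimp [myCocone, jId]
  show decMap Y c (dec (gen := gen) (a := c) (c := c) ((JC S gen).map (𝟙 (oP c)))) = _
  erw [dec_JC]
  simp [decMap]
  exact Category.id_comp _

lemma myCocone_ι_g (g : Gset S gen c) :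
    (myCocone Y c).ι.app (jG c g) =
      Sigma.ι (fun g : Gset S gen c => Y.obj (oP g.1)) g ≫ coprod.inr := by
  obtain ⟨gi, gp, gs⟩ := g
  dsimp [myCocone, jG]
  erw [show dec (gen := gen) (gHom ⟨gi, gp, gs⟩) = _ from dec_startsGen gp gs]
  simp [decMap]
  erw [Y.map_id, Category.id_comp]

def myIsColimit : IsColimit (myCocone Y c) where
  desc s := coprod.desc (s.ι.app (jId c)) (Sigma.desc fun g => s.ι.app (jG c g))
  fac s f := by
    dsimp [myCocone]
    rcases hd : dec (gen := gen) f.hom with ⟨h, hh⟩ | ⟨g, h, hh⟩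
    · have hw : (JC S gen).map h ≫ (jId c).hom = f.hom := by
        dsimp [jId]
        erw [CategoryTheory.Functor.map_id, Category.comp_id]
        exact hh
      have hs := s.w (CostructuredArrow.homMk h hw : f ⟶ jId c)
      dsimp at hs
      simp [decMap, ← hs]
      erw [Category.assoc, coprod.inl_desc]; rfl
    · have hw : (JC S gen).map h ≫ (jG c g).hom = f.hom := hh
      have hs := s.w (CostructuredArrow.homMk h hw : f ⟶ jG c g)
      dsimp at hs
      simp [decMap, ← hs]
      erw [Category.assoc, Category.assoc, coprod.inr_desc, Sigma.ι_desc]; rfl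
  uniq s m hm := by
    apply coprod.hom_ext
    · erw [coprod.inl_desc, ← hm (jId c), myCocone_ι_id]
      rfl
    · erw [coprod.inr_desc]
      apply Sigma.hom_ext
      intro g
      erw [Sigma.ι_desc, ← hm (jG c g), myCocone_ι_g]
      simp
      exact (Category.assoc _ _ _).symm


variable (S gen)

/-- The restriction functor `J_C^* : sSet^C → sSet^P` along the inclusion of the
initial semi-theory `P` into a free semi-theory `C` admits a left adjoint `J_{C*}`
given on objects by `(J_{C*}Y)(c) = Y(c) ⊔ ⨆_{φ ∈ G_c} Y(dom φ)`. -/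
theorem jstar_has_explicit_left_adjoint :
    ∃ L : (FreeP S ⥤ SSet.{0}) ⥤ (FreeC S gen ⥤ SSet.{0}),
      Nonempty (L ⊣ Jstar S gen) ∧
      ∀ (Y : FreeP S ⥤ SSet.{0}) (c : FObj S gen),
        Nonempty ((L.obj Y).obj c ≅
          (Y.obj (c : List S)) ⨿ (∐ fun g : Gset S gen c => Y.obj (g.1 : List S))) := by
  refine ⟨(JC S gen).lan, ⟨(JC S gen).lanAdjunction SSet.{0}⟩, fun Y c => ⟨?_⟩⟩
  exact ((JC S gen).leftKanExtensionObjIsoColimit Y c).trans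
    (colimit.isoColimitCocone ⟨myCocone Y c, myIsColimit Y c⟩)

end
end

section
/- Let C be a free S-sorted semi-theory and let C' be the category with the same objects whose morphisms c_s → c_{s'} into a singleton sort are labeled directed trees built from the free generators of C (with initial edges labeled by projections of the domain, no internal edges labeled by projections, and compatibility of labels at each vertex), with morphisms into a tuple object defined as tuples of tree morphisms and composition given by grafting. Then C', with projections given by the one-edge trees labeled p^s_i, is an S-sorted algebraic theory: for every tuple s = (s₁,...,sₙ), the object c_s is the categorical product of c_{s₁},...,c_{sₙ} in C' with the projections p^s_i. -/
open CategoryTheory Limits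

variable {S : Type} (gen : List S → List S → Type)

/-- Labeled directed trees: the morphisms into a singleton sort of the algebraic
completion of a free `S`-sorted semi-theory with generators `gen`.  A tree from the
tuple `dom` into the sort `s` is either a single initial edge labeled by a
projection of `dom`, or a bottom edge labeled `φ_i` for a generator `φ` together
with subtrees feeding the inputs of `φ` (so that initial edges are projections and
no internal edge is a projection). -/
inductive Tr (dom : List S) : S → Type where
  | proj (k : Fin dom.length) : Tr dom (dom.get k)
  | node {m l' : List S} (φ : gen m l') (i : Fin l'.length)
      (args : ∀ j : Fin m.length, Tr dom (m.get j)) : Tr dom (l'.get i)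

/-- Grafting: substituting trees for the initial (projection) edges of a tree. -/
def subst {b a : List S} : ∀ {s : S},
    Tr gen b s → (∀ k : Fin b.length, Tr gen a (b.get k)) → Tr gen a s
  | _, .proj k, f => f k
  | _, .node φ i args, f => .node φ i (fun j => subst (args j) f)

lemma subst_proj {b : List S} : ∀ {s : S} (t : Tr gen b s),
    subst gen t (fun k => Tr.proj (dom := b) k) = t := by
  intro s t
  induction t with
  | proj k => rfl
  | node φ i args ih =>
    simp only [subst]
    congr 1
    funext j
    exact ih j

lemma subst_subst {a b c : List S} : ∀ {s : S} (t : Tr gen c s)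
    (g : ∀ k : Fin c.length, Tr gen b (c.get k))
    (f : ∀ k : Fin b.length, Tr gen a (b.get k)),
    subst gen (subst gen t g) f = subst gen t (fun k => subst gen (g k) f) := by
  intro s t
  induction t with
  | proj k => intro g f; rfl
  | node φ i args ih =>
    intro g f
    simp only [subst]
    congr 1
    funext j
    exact ih j g f

/-- The objects of the completion `C'`: tuples of sorts. -/
def CP (_gen : List S → List S → Type) : Type := List S

/-- The completion `C'` of the free semi-theory: morphisms into a tuple are tuples
of labeled trees, and composition is given by grafting. -/
instance : Category.{0} (CP gen) where
  Hom a b := ∀ i : Fin (List.length (b : List S)),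
    Tr gen (a : List S) (List.get (b : List S) i)
  id a := fun i => Tr.proj (dom := (a : List S)) i
  comp f g := fun i => subst gen (g i) f
  id_comp f := by funext i; exact subst_proj gen (f i)
  comp_id f := by funext i; rfl
  assoc f g h := by funext i; exact (subst_subst gen (h i) g f).symm

/-- The projection `p^s_i` of `C'`: the one-edge tree labeled by the projection. -/
def CPproj (l : List S) (k : Fin l.length) :
    ((show CP gen from l) ⟶ (show CP gen from [l.get k])) := fun i =>
  (show List.get l k = List.get [l.get k] i by simp [List.getElem_cons_zero]) ▸
    Tr.proj (dom := l) k

/-- `C'` is an `S`-sorted algebraic theory: each `c_s` is the categorical product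
of the singleton-sort objects `c_{s₁}, …, c_{sₙ}` with the one-edge projection
trees as projections. -/
theorem CP_isProduct (l : List S) :
    Nonempty (IsLimit (Fan.mk (show CP gen from l) (fun k => CPproj gen l k))) := by
  refine ⟨mkFanLimit _ (fun s => fun k => s.proj k ⟨0, by simp⟩) ?_ ?_⟩
  · intro s k
    funext i
    match i with
    | ⟨0, _⟩ => rfl
  · intro s m h
    funext k
    have := congrFun (h k) ⟨0, by simp⟩
    exact this
end
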